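/- The bi-periodic Jacobsthal and bi-periodic Jacobsthal Lucas sequences satisfy C_n = 2·j_{n−1} + j_{n+1} and (ab + 8)·j_n = 2·C_{n−1} + C_{n+1} for all n ≥ 1. -/
import Mathlib

noncomputable def jj (a b : ℝ) : ℕ → ℝ
  | 0 => 0
  | 1 => 1
  | n + 2 => (if Even (n + 2) then a else b) * jj a b (n + 1) + 2 * jj a b n

noncomputable def CC (a b : ℝ) : ℕ → ℝ
  | 0 => 2
  | 1 => a
  | n + 2 => (if Even (n + 2) then b else a) * CC a b (n + 1) + 2 * CC a b n

lemma key (a b : ℝ) : ∀ k : ℕ, CC a b (k+1) = 2 * jj a b k + jj a b (k+2) ∧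
    (a*b+8) * jj a b (k+1) = 2 * CC a b k + CC a b (k+2) := by
  intro k
  induction k using Nat.strong_induction_on with
  | _ k ih =>
    match k with
    | 0 => norm_num [jj, CC]; ring
    | 1 => norm_num [jj, CC, show ¬ Even 3 by decide]; constructor <;> ring
    | (k+2) =>
      obtain ⟨h1, h2⟩ := ih (k+1) (by omega)
      obtain ⟨h3, h4⟩ := ih k (by omega)
      set c : ℝ := if Even k then a else b with hc
      set d : ℝ := if Even k then b else a with hd
      have hpar2 : Even (k+2) ↔ Even k := by simp [Nat.even_add]
      have hpar3 : Even (k+3) ↔ ¬ Even k := by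
        rw [show k+3 = (k+2)+1 from rfl, Nat.even_add_one, hpar2]
      have hpar4 : Even (k+4) ↔ Even k := by
        rw [show k+4 = (k+2)+2 from rfl, Nat.even_add, hpar2]; simp
      have hj2 : jj a b (k+2) = c * jj a b (k+1) + 2 * jj a b k := by
        rw [jj, if_congr hpar2 rfl rfl]
      have hj3 : jj a b (k+3) = d * jj a b (k+2) + 2 * jj a b (k+1) := by
        rw [show k+3 = (k+1)+2 from rfl, jj, if_congr hpar3 rfl rfl, ite_not]
      have hj4 : jj a b (k+4) = c * jj a b (k+3) + 2 * jj a b (k+2) := by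
        rw [show k+4 = (k+2)+2 from rfl, jj, if_congr hpar4 rfl rfl]
      have hC2 : CC a b (k+2) = d * CC a b (k+1) + 2 * CC a b k := by
        rw [CC, if_congr hpar2 rfl rfl]
      have hC3 : CC a b (k+3) = c * CC a b (k+2) + 2 * CC a b (k+1) := by
        rw [show k+3 = (k+1)+2 from rfl, CC, if_congr hpar3 rfl rfl, ite_not]
      have hC4 : CC a b (k+4) = d * CC a b (k+3) + 2 * CC a b (k+2) := by
        rw [show k+4 = (k+2)+2 from rfl, CC, if_congr hpar4 rfl rfl]
      constructor
      · show CC a b (k+3) = 2 * jj a b (k+2) + jj a b (k+4)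
        linear_combination hC3 - hj4 + c*h1 + 2*h3 - 2*hj2
      · show (a*b+8) * jj a b (k+3) = 2 * CC a b (k+2) + CC a b (k+4)
        linear_combination (a*b+8)*hj3 - hC4 + d*h2 + 2*h4 - 2*hC2

theorem stmt14 (a b : ℝ) (ha : a ≠ 0) (hb : b ≠ 0) (n : ℕ) (hn : 1 ≤ n) :
    CC a b n = 2 * jj a b (n - 1) + jj a b (n + 1) ∧
    (a * b + 8) * jj a b n = 2 * CC a b (n - 1) + CC a b (n + 1) := by
  obtain ⟨m, rfl⟩ := Nat.exists_eq_add_of_le hn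
  simpa [Nat.add_sub_cancel, add_comm 1 m] using key a b m
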